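/- Let G be an amenable group with Følner net F = (F_j)_{j∈J}, and let A and B be finite sets. Suppose X ⊆ A^G and Y ⊆ B^G are subshifts with X strongly irreducible, and let τ : X → Y be a pre-injective cellular automaton. Then ent_F(τ(X)) = ent_F(X). -/

import Mathlib

open Pointwise Filter

variable {G : Type*} [Group G]

/-- The shift action of `G` on configurations: `(g • x)(h) = x(g⁻¹h)`. -/
def shift {A : Type*} (g : G) (x : G → A) : G → A := fun h => x (g⁻¹ * h)

/-- A subshift: a closed, shift-invariant subset of `A^G` (prodiscrete topology). -/
def IsSubshift {A : Type*} [TopologicalSpace A] (X : Set (G → A)) : Prop :=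
  IsClosed X ∧ ∀ g : G, ∀ x ∈ X, shift g x ∈ X

/-- The `Δ`-neighborhood `Ω^{+Δ} = ΩΔ⁻¹ = {g : gΔ ∩ Ω ≠ ∅}`. -/
def plusNbhd (Ω Δ : Set G) : Set G := {g : G | ∃ d ∈ Δ, g * d ∈ Ω}

/-- `Δ`-irreducibility of a subshift. -/
def DeltaIrreducible {A : Type*} (Δ : Finset G) (X : Set (G → A)) : Prop :=
  ∀ Ω₁ Ω₂ : Finset G,
    plusNbhd (Ω₁ : Set G) (Δ : Set G) ∩ (Ω₂ : Set G) = ∅ →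
    ∀ x₁ ∈ X, ∀ x₂ ∈ X,
      ∃ x ∈ X, (∀ g ∈ Ω₁, x g = x₁ g) ∧ (∀ g ∈ Ω₂, x g = x₂ g)

/-- Strong irreducibility: `Δ`-irreducible for some finite `Δ ⊆ G`. -/
def StronglyIrreducible {A : Type*} (X : Set (G → A)) : Prop :=
  ∃ Δ : Finset G, DeltaIrreducible Δ X

/-- A cellular automaton between subshifts `X ⊆ A^G` and `Y ⊆ B^G`:
a map that sends `X` into `Y`, is continuous on `X`, and is `G`-equivariant on `X`. -/
def IsCellularAutomaton {A B : Type*} [TopologicalSpace A] [TopologicalSpace B]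
    (X : Set (G → A)) (Y : Set (G → B)) (τ : (G → A) → (G → B)) : Prop :=
  Set.MapsTo τ X Y ∧ ContinuousOn τ X ∧ ∀ g : G, ∀ x ∈ X, τ (shift g x) = shift g (τ x)

/-- Pre-injectivity of a map on a subshift `X`. -/
def PreInjective {A B : Type*} (X : Set (G → A)) (τ : (G → A) → (G → B)) : Prop :=
  ∀ x₁ ∈ X, ∀ x₂ ∈ X, {g : G | x₁ g ≠ x₂ g}.Finite → τ x₁ = τ x₂ → x₁ = x₂

/-- A Følner net for `G`, indexed by a directed preorder `J`. -/
def IsFolnerNet {J : Type*} [Preorder J] (F : J → Finset G) : Prop :=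
  (∀ j, (F j).Nonempty) ∧
  ∀ E : Finset G,
    Tendsto (fun j => ((plusNbhd (F j : Set G) (E : Set G) \ (F j : Set G)).ncard : ℝ) /
        ((F j).card : ℝ)) atTop (nhds 0)

/-- The entropy of a subset `X ⊆ A^G` with respect to a Følner net `F`. -/
noncomputable def entropy {J A : Type*} [Preorder J] (F : J → Finset G) (X : Set (G → A)) : ℝ :=
  limsup (fun j => Real.log (((Set.restrict (F j : Set G)) '' X).ncard : ℝ) / ((F j).card : ℝ))
    atTop

/-- Topological mixing for a subshift (open subsets of `X` are traces of ambient opens). -/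
def TopologicallyMixing {A : Type*} [TopologicalSpace A] (X : Set (G → A)) : Prop :=
  ∀ U V : Set (G → A), IsOpen U → IsOpen V → (U ∩ X).Nonempty → (V ∩ X).Nonempty →
    ∃ F : Finset G, ∀ g : G, g ∉ F → ((U ∩ X) ∩ (shift g '' (V ∩ X))).Nonempty

/-- An `(E,E')`-tiling. -/
def IsTiling (E E' T : Set G) : Prop :=
  T.PairwiseDisjoint (fun g => g • E) ∧ (⋃ g ∈ T, g • E') = Set.univ

set_option linter.unusedSectionVars false

lemma cyl_isOpen {A : Type*} [TopologicalSpace A] [DiscreteTopology A] (S : Finset G) (c : G → A) :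
    IsOpen {y : G → A | ∀ g ∈ S, y g = c g} := by
  have : {y : G → A | ∀ g ∈ S, y g = c g} = ⋂ g ∈ S, (fun y : G → A => y g) ⁻¹' {c g} := by
    ext y; simp [Set.mem_iInter]
  rw [this]
  exact isOpen_biInter_finset fun g _ => (continuous_apply g).isOpen_preimage _ (isOpen_discrete _)

lemma exists_memory {A B : Type*} [Finite A] [TopologicalSpace A] [DiscreteTopology A]
    [TopologicalSpace B] [DiscreteTopology B]
    {X : Set (G → A)} (hXc : IsClosed X) {τ : (G → A) → (G → B)}
    (hcont : ContinuousOn τ X) :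
    ∃ M : Finset G, (1:G) ∈ M ∧
      ∀ x ∈ X, ∀ x' ∈ X, (∀ g ∈ M, x g = x' g) → τ x 1 = τ x' 1 := by
  classical
  have hXcomp : IsCompact X := hXc.isCompact
  have hstep : ∀ x ∈ X, ∃ S : Finset G, ∀ y ∈ X, (∀ g ∈ S, y g = x g) → τ y 1 = τ x 1 := by
    intro x hx
    have hcw : ContinuousWithinAt (fun y => τ y 1) X x :=
      ((continuous_apply (1:G)).comp_continuousOn hcont) x hx
    have hV : (fun y => τ y 1) ⁻¹' {τ x 1} ∈ nhdsWithin x X :=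
      hcw.preimage_mem_nhdsWithin ((isOpen_discrete ({τ x 1} : Set B)).mem_nhds rfl)
    rw [mem_nhdsWithin] at hV
    obtain ⟨U, hUo, hxU, hUX⟩ := hV
    obtain ⟨I, u, hu, hsub⟩ := (isOpen_pi_iff.mp hUo) x hxU
    refine ⟨I, fun y hy hagree => ?_⟩
    have : y ∈ U := hsub fun g hg => by rw [hagree g hg]; exact (hu g hg).2
    exact hUX ⟨this, hy⟩
  choose S hS using fun x (hx : x ∈ X) => hstep x hx
  -- extend S to a total function
  set S' : (G → A) → Finset G := fun x => if hx : x ∈ X then S x hx else ∅ with hS'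
  have hcover : ∀ x ∈ X, {y : G → A | ∀ g ∈ S' x, y g = x g} ∈ nhds x := fun x hx =>
    (cyl_isOpen (S' x) x).mem_nhds (fun g _ => rfl)
  obtain ⟨t, htX, htcov⟩ := hXcomp.elim_nhds_subcover _ hcover
  refine ⟨insert 1 (t.sup S'), Finset.mem_insert_self _ _, ?_⟩
  intro x hx x' hx' hagree
  obtain ⟨y, hyt, hy⟩ := Set.mem_iUnion₂.mp (htcov hx)
  have hyX : y ∈ X := htX y hyt
  have hSy : ∀ g ∈ S' y, g ∈ insert 1 (t.sup S') := fun g hg =>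
    Finset.mem_insert_of_mem (Finset.mem_sup.mpr ⟨y, hyt, hg⟩)
  have hseq : S' y = S y hyX := dif_pos hyX
  have h1 : τ x 1 = τ y 1 :=
    hS y hyX x hx (fun g hg => hy g (hseq ▸ hg))
  have h2 : τ x' 1 = τ y 1 := by
    refine hS y hyX x' hx' (fun g hg => ?_)
    have hg' : g ∈ S' y := hseq ▸ hg
    rw [← hagree g (hSy g hg')]
    exact hy g hg'
  rw [h1, h2]

section Counting

variable {A B : Type*} [Finite A] [Finite B]

omit [Group G] in
lemma pat_finite (Ω : Set G) (hΩ : Ω.Finite) (Z : Set (G → A)) :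
    (Set.restrict Ω '' Z).Finite := by
  haveI : Finite ↥Ω := hΩ.to_subtype
  exact Set.toFinite _

omit [Group G] in
lemma pat_mono {Ω Ω' : Set G} (h : Ω ⊆ Ω') (hΩ' : Ω'.Finite) (Z : Set (G → A)) :
    (Set.restrict Ω '' Z).ncard ≤ (Set.restrict Ω' '' Z).ncard := by
  haveI : Finite ↥Ω' := hΩ'.to_subtype
  set ρ : (↥Ω' → A) → (↥Ω → A) := fun q g => q ⟨g.1, h g.2⟩ with hρ
  have himg : Set.restrict Ω '' Z = ρ '' (Set.restrict Ω' '' Z) := by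
    rw [← Set.image_comp]; rfl
  rw [himg]
  exact Set.ncard_image_le (Set.toFinite _)

omit [Group G] in
lemma pat_le_mul {Ω Ω' : Set G} (h : Ω ⊆ Ω') (hΩ' : Ω'.Finite) (Z : Set (G → A)) :
    (Set.restrict Ω' '' Z).ncard ≤
      (Set.restrict Ω '' Z).ncard * Nat.card A ^ (Ω' \ Ω).ncard := by
  classical
  haveI hfin' : Finite ↥Ω' := hΩ'.to_subtype
  haveI hfin0 : Finite ↥Ω := (hΩ'.subset h).to_subtype
  haveI hfind : Finite ↥(Ω' \ Ω) := (hΩ'.subset Set.diff_subset).to_subtype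
  set T : Set ((↥Ω → A) × (↥(Ω' \ Ω) → A)) :=
    (Set.restrict Ω '' Z) ×ˢ Set.univ with hT
  set f : (↥Ω' → A) → (↥Ω → A) × (↥(Ω' \ Ω) → A) :=
    fun q => (fun g => q ⟨g.1, h g.2⟩, fun g => q ⟨g.1, g.2.1⟩) with hf
  have hmaps : ∀ q ∈ Set.restrict Ω' '' Z, f q ∈ T := by
    rintro q ⟨z, hz, rfl⟩
    exact ⟨⟨z, hz, rfl⟩, Set.mem_univ _⟩
  have hinj : Set.InjOn f (Set.restrict Ω' '' Z) := by
    rintro q _ q' _ hqq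
    funext g
    rcases Classical.em (g.1 ∈ Ω) with hg | hg
    · exact congrFun (congrArg Prod.fst hqq) ⟨g.1, hg⟩
    · exact congrFun (congrArg Prod.snd hqq) ⟨g.1, g.2, hg⟩
  have hle := Set.ncard_le_ncard_of_injOn f hmaps hinj (Set.toFinite T)
  refine hle.trans ?_
  have : T.ncard = (Set.restrict Ω '' Z).ncard * Nat.card (↥(Ω' \ Ω) → A) := by
    rw [← Nat.card_coe_set_eq, hT, Nat.card_congr (Equiv.Set.prod _ _), Nat.card_prod,
      Nat.card_coe_set_eq, Nat.card_congr (Equiv.Set.univ _)]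
  rw [this, Nat.card_fun, Nat.card_coe_set_eq]

end Counting

section TauCount

variable {A B : Type*} [Finite A] [Finite B]

lemma pat_image_le [DecidableEq G] {X : Set (G → A)} {τ : (G → A) → (G → B)} {M : Finset G}
    (hM : ∀ g : G, ∀ x ∈ X, ∀ x' ∈ X,
      (∀ m ∈ M, x (g * m) = x' (g * m)) → τ x g = τ x' g)
    (Ω : Finset G) :
    (Set.restrict (↑Ω : Set G) '' (τ '' X)).ncard ≤
      (Set.restrict (↑(Ω * M) : Set G) '' X).ncard := by
  classical
  set S := Set.restrict (↑Ω : Set G) '' (τ '' X) with hS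
  rcases S.eq_empty_or_nonempty with hSe | hSne
  · simp [hSe]
  obtain ⟨p₀, y₀, ⟨x₀, hx₀X, hx₀⟩, hp₀⟩ := hSne
  have hsel : ∀ p ∈ S, ∃ x, x ∈ X ∧ Set.restrict (↑Ω : Set G) (τ x) = p := by
    rintro p ⟨y, ⟨x, hx, rfl⟩, rfl⟩; exact ⟨x, hx, rfl⟩
  choose ξ hξX hξp using hsel
  set f : (↥(↑Ω : Set G) → B) → (↥(↑(Ω * M) : Set G) → A) :=
    fun p => if hp : p ∈ S then Set.restrict _ (ξ p hp) else Set.restrict _ x₀ with hf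
  have hmaps : ∀ p ∈ S, f p ∈ Set.restrict (↑(Ω * M) : Set G) '' X := by
    intro p hp
    rw [hf]; simp only [dif_pos hp]
    exact ⟨ξ p hp, hξX p hp, rfl⟩
  have hinj : Set.InjOn f S := by
    intro p hp q hq hpq
    rw [hf] at hpq; simp only [dif_pos hp, dif_pos hq] at hpq
    have key : ∀ g ∈ Ω, τ (ξ p hp) g = τ (ξ q hq) g := by
      intro g hg
      refine hM g _ (hξX p hp) _ (hξX q hq) fun m hm => ?_
      have hgm : g * m ∈ Ω * M := Finset.mul_mem_mul hg hm
      exact congrFun hpq ⟨g * m, hgm⟩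
    rw [← hξp p hp, ← hξp q hq]
    funext g
    exact key g.1 g.2
  exact Set.ncard_le_ncard_of_injOn f hmaps hinj (Set.toFinite _)

end TauCount

section Glue

variable {A : Type*} [Finite A] [TopologicalSpace A] [DiscreteTopology A]

lemma glue [DecidableEq G] {X : Set (G → A)} (hXc : IsClosed X) {Δ : Finset G}
    (hΔ : DeltaIrreducible Δ X) (Ω : Finset G) {x₁ x₀ : G → A}
    (hx₁ : x₁ ∈ X) (hx₀ : x₀ ∈ X) :
    ∃ x ∈ X, (∀ g ∈ Ω, x g = x₁ g) ∧ ∀ g : G, g ∉ Ω * Δ⁻¹ → x g = x₀ g := by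
  classical
  set N : Finset G := Ω * Δ⁻¹ with hN
  have hplus : plusNbhd (↑Ω : Set G) (↑Δ : Set G) ⊆ (↑N : Set G) := by
    rintro g ⟨d, hd, hgd⟩
    have : g = (g * d) * d⁻¹ := by group
    rw [this]
    exact Finset.mul_mem_mul hgd (Finset.inv_mem_inv hd)
  set S : Finset G → Set (G → A) := fun t =>
    {x | x ∈ X ∧ (∀ g ∈ Ω, x g = x₁ g) ∧ ∀ g ∈ t, g ∉ N → x g = x₀ g} with hSdef
  have hdir : Directed (· ⊇ ·) S := by
    intro t t'
    exact ⟨t ∪ t',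
      fun x hx => ⟨hx.1, hx.2.1, fun g hg => hx.2.2 g (Finset.mem_union_left _ hg)⟩,
      fun x hx => ⟨hx.1, hx.2.1, fun g hg => hx.2.2 g (Finset.mem_union_right _ hg)⟩⟩
  have hne : ∀ t, (S t).Nonempty := by
    intro t
    have hdisj : plusNbhd (↑Ω : Set G) (↑Δ : Set G) ∩ (↑(t.filter (· ∉ N)) : Set G) = ∅ := by
      rw [Set.eq_empty_iff_forall_notMem]
      rintro g ⟨hg1, hg2⟩
      simp only [Finset.coe_filter, Set.mem_setOf_eq] at hg2
      exact hg2.2 (hplus hg1)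
    obtain ⟨x, hxX, h1, h2⟩ := hΔ Ω (t.filter (· ∉ N)) hdisj x₁ hx₁ x₀ hx₀
    exact ⟨x, hxX, h1, fun g hg hgN => h2 g (Finset.mem_filter.mpr ⟨hg, hgN⟩)⟩
  have hclosed : ∀ t, IsClosed (S t) := by
    intro t
    have : S t = X ∩ ((⋂ g ∈ Ω, {x : G → A | x g = x₁ g}) ∩
        ⋂ g ∈ t, {x : G → A | g ∉ N → x g = x₀ g}) := by
      ext x
      simp only [hSdef, Set.mem_inter_iff, Set.mem_iInter, Set.mem_setOf_eq]
    rw [this]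
    refine hXc.inter (IsClosed.inter ?_ ?_)
    · refine isClosed_biInter fun g _ => ?_
      have heq : {x : G → A | x g = x₁ g} = (fun x : G → A => x g) ⁻¹' {x₁ g} := by
        ext x; simp
      rw [heq]
      exact IsClosed.preimage (continuous_apply g) (isClosed_discrete _)
    · refine isClosed_biInter fun g _ => ?_
      by_cases hgN : g ∈ N
      · have huniv : {x : G → A | g ∉ N → x g = x₀ g} = Set.univ := by
          ext x; simp [hgN]
        rw [huniv]; exact isClosed_univ
      · have heq : {x : G → A | g ∉ N → x g = x₀ g} = (fun x : G → A => x g) ⁻¹' {x₀ g} := by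
          ext x; simp [hgN]
        rw [heq]
        exact IsClosed.preimage (continuous_apply g) (isClosed_discrete _)
  haveI : CompactSpace (G → A) := by infer_instance
  have hcompact : ∀ t, IsCompact (S t) := fun t => (hclosed t).isCompact
  obtain ⟨x, hx⟩ := IsCompact.nonempty_iInter_of_directed_nonempty_isCompact_isClosed
    S hdir hne hcompact hclosed
  simp only [Set.mem_iInter] at hx
  have hx0 := hx ∅
  refine ⟨x, hx0.1, hx0.2.1, fun g hg => ?_⟩
  exact (hx {g}).2.2 g (Finset.mem_singleton_self g) hg

end Glue

section L2

variable {A B : Type*} [TopologicalSpace A] [TopologicalSpace B]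

lemma memory_all {X : Set (G → A)} (hX : IsSubshift X) {Y : Set (G → B)}
    {τ : (G → A) → (G → B)} (hτ : IsCellularAutomaton X Y τ) {M : Finset G}
    (hMmem : ∀ x ∈ X, ∀ x' ∈ X, (∀ g ∈ M, x g = x' g) → τ x 1 = τ x' 1) :
    ∀ g : G, ∀ x ∈ X, ∀ x' ∈ X,
      (∀ m ∈ M, x (g * m) = x' (g * m)) → τ x g = τ x' g := by
  intro g x hx x' hx' hagree
  have hsx : shift g⁻¹ x ∈ X := hX.2 g⁻¹ x hx
  have hsx' : shift g⁻¹ x' ∈ X := hX.2 g⁻¹ x' hx'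
  have h1 : τ (shift g⁻¹ x) 1 = τ (shift g⁻¹ x') 1 := by
    refine hMmem _ hsx _ hsx' fun m hm => ?_
    show x (g⁻¹⁻¹ * m) = x' (g⁻¹⁻¹ * m)
    rw [inv_inv]
    exact hagree m hm
  rw [hτ.2.2 g⁻¹ x hx, hτ.2.2 g⁻¹ x' hx'] at h1
  simpa [shift] using h1

end L2

lemma plusNbhd_coe [DecidableEq G] (Ω E : Finset G) :
    plusNbhd (↑Ω : Set G) (↑(E⁻¹) : Set G) = (↑(Ω * E) : Set G) := by
  ext g
  constructor
  · rintro ⟨d, hd, hgd⟩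
    have hd' : d⁻¹ ∈ E := by
      rw [Finset.coe_inv] at hd
      simpa using hd
    have hmem : (g * d) * d⁻¹ ∈ Ω * E := Finset.mul_mem_mul hgd hd'
    exact Finset.mem_coe.mpr (by simpa using hmem)
  · intro hg
    obtain ⟨a, ha, e, he, rfl⟩ := Finset.mem_mul.mp hg
    refine ⟨e⁻¹, ?_, ?_⟩
    · rw [Finset.coe_inv]; simpa using he
    · have : a * e * e⁻¹ = a := by group
      rw [this]; exact ha

section MainCount

variable {A B : Type*} [Finite A] [Finite B] [TopologicalSpace A] [DiscreteTopology A]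

lemma pat_le_image [DecidableEq G] {X : Set (G → A)} (hXc : IsClosed X)
    {Δ : Finset G} (hΔ : DeltaIrreducible Δ X) {τ : (G → A) → (G → B)} {M : Finset G}
    (hM : ∀ g : G, ∀ x ∈ X, ∀ x' ∈ X,
      (∀ m ∈ M, x (g * m) = x' (g * m)) → τ x g = τ x' g)
    (hpre : PreInjective X τ) {x₀ : G → A} (hx₀ : x₀ ∈ X) (Ω : Finset G) :
    (Set.restrict (↑Ω : Set G) '' X).ncard ≤
      (Set.restrict (↑(Ω * Δ⁻¹ * M⁻¹) : Set G) '' (τ '' X)).ncard := by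
  classical
  set N : Finset G := Ω * Δ⁻¹ with hNdef
  set K : Finset G := Ω * Δ⁻¹ * M⁻¹ with hKdef
  have hsel : ∀ p ∈ Set.restrict (↑Ω : Set G) '' X, ∃ x, x ∈ X ∧
      (∀ g (hg : g ∈ Ω), x g = p ⟨g, hg⟩) ∧ ∀ g : G, g ∉ N → x g = x₀ g := by
    rintro p ⟨x₁, hx₁, rfl⟩
    obtain ⟨x, hxX, h1, h2⟩ := glue hXc hΔ Ω hx₁ hx₀
    exact ⟨x, hxX, fun g hg => h1 g hg, h2⟩
  choose ξ hξX hξp hξ0 using hsel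
  set f : (↥(↑Ω : Set G) → A) → (↥(↑K : Set G) → B) :=
    fun p => if hp : p ∈ Set.restrict (↑Ω : Set G) '' X
      then Set.restrict _ (τ (ξ p hp)) else Set.restrict _ (τ x₀) with hf
  have hmaps : ∀ p ∈ Set.restrict (↑Ω : Set G) '' X,
      f p ∈ Set.restrict (↑K : Set G) '' (τ '' X) := by
    intro p hp
    rw [hf]; simp only [dif_pos hp]
    exact ⟨τ (ξ p hp), ⟨ξ p hp, hξX p hp, rfl⟩, rfl⟩
  have hinj : Set.InjOn f (Set.restrict (↑Ω : Set G) '' X) := by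
    intro p hp q hq hpq
    rw [hf] at hpq; simp only [dif_pos hp, dif_pos hq] at hpq
    have hτeq : τ (ξ p hp) = τ (ξ q hq) := by
      funext g
      by_cases hgK : g ∈ K
      · exact congrFun hpq ⟨g, hgK⟩
      · have hgm : ∀ m ∈ M, (g * m) ∉ N := by
          intro m hm hgmN
          refine hgK ?_
          have : g = (g * m) * m⁻¹ := by group
          rw [hKdef, ← hNdef, this]
          exact Finset.mul_mem_mul hgmN (Finset.inv_mem_inv hm)
        have e1 : τ (ξ p hp) g = τ x₀ g :=
          hM g _ (hξX p hp) _ hx₀ fun m hm => hξ0 p hp _ (hgm m hm)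
        have e2 : τ (ξ q hq) g = τ x₀ g :=
          hM g _ (hξX q hq) _ hx₀ fun m hm => hξ0 q hq _ (hgm m hm)
        rw [e1, e2]
    have hdiff : {g : G | ξ p hp g ≠ ξ q hq g}.Finite := by
      refine (N.finite_toSet).subset fun g hg => ?_
      by_contra hgN
      exact hg (by rw [hξ0 p hp g hgN, hξ0 q hq g hgN])
    have hxeq : ξ p hp = ξ q hq := hpre _ (hξX p hp) _ (hξX q hq) hdiff hτeq
    funext g
    rw [← hξp p hp g.1 g.2, ← hξp q hq g.1 g.2, hxeq]
  exact Set.ncard_le_ncard_of_injOn f hmaps hinj (Set.toFinite _)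

end MainCount

section Bounds

variable {A : Type*} [Finite A]

lemma aux_bounds {Z : Set (G → A)} (hZ : Z.Nonempty) (Ω : Finset G) (hΩ : Ω.Nonempty) :
    Real.log (((Set.restrict (↑Ω : Set G) '' Z).ncard : ℝ)) / (Ω.card : ℝ) ∈
      Set.Icc 0 (Real.log (Nat.card A)) := by
  haveI : Nonempty A := ⟨hZ.choose 1⟩
  set n := (Set.restrict (↑Ω : Set G) '' Z).ncard with hn
  have hfin : (Set.restrict (↑Ω : Set G) '' Z).Finite := Set.toFinite _
  have hn1 : 1 ≤ n := (Set.ncard_pos hfin).mpr (hZ.image _)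
  have hnub : n ≤ Nat.card A ^ Ω.card := by
    have h1 : n ≤ (Set.univ : Set (↥(↑Ω : Set G) → A)).ncard :=
      Set.ncard_le_ncard (Set.subset_univ _) (Set.toFinite _)
    rwa [Set.ncard_univ, Nat.card_fun, Nat.card_coe_set_eq, Set.ncard_coe_finset] at h1
  have hΩpos : (0:ℝ) < (Ω.card : ℝ) := by exact_mod_cast hΩ.card_pos
  constructor
  · exact div_nonneg (Real.log_nonneg (by exact_mod_cast hn1)) hΩpos.le
  · rw [div_le_iff₀ hΩpos]
    calc Real.log (n : ℝ) ≤ Real.log ((Nat.card A ^ Ω.card : ℕ) : ℝ) :=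
          Real.log_le_log (by exact_mod_cast hn1) (by exact_mod_cast hnub)
      _ = Real.log (Nat.card A) * (Ω.card : ℝ) := by
          rw [Nat.cast_pow, Real.log_pow]; ring

lemma aux_log_step [DecidableEq G] {Z : Set (G → A)} (hZ : Z.Nonempty)
    {Ω Ω' : Finset G} (h : Ω ⊆ Ω') :
    Real.log (((Set.restrict (↑Ω' : Set G) '' Z).ncard : ℝ)) ≤
      Real.log (((Set.restrict (↑Ω : Set G) '' Z).ncard : ℝ)) +
        ((Ω' \ Ω).card : ℝ) * Real.log (Nat.card A) := by
  haveI : Nonempty A := ⟨hZ.choose 1⟩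
  have hsub : (↑Ω : Set G) ⊆ (↑Ω' : Set G) := by exact_mod_cast h
  have hstep := pat_le_mul hsub (Ω'.finite_toSet) Z
  have hd : ((↑Ω' : Set G) \ (↑Ω : Set G)).ncard = (Ω' \ Ω).card := by
    rw [← Finset.coe_sdiff, Set.ncard_coe_finset]
  rw [hd] at hstep
  have h1 : 1 ≤ (Set.restrict (↑Ω' : Set G) '' Z).ncard :=
    (Set.ncard_pos (Set.toFinite _)).mpr (hZ.image _)
  have h1' : 1 ≤ (Set.restrict (↑Ω : Set G) '' Z).ncard :=
    (Set.ncard_pos (Set.toFinite _)).mpr (hZ.image _)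
  have hA1 : 1 ≤ Nat.card A := Nat.card_pos
  calc Real.log (((Set.restrict (↑Ω' : Set G) '' Z).ncard : ℝ))
      ≤ Real.log ((((Set.restrict (↑Ω : Set G) '' Z).ncard * Nat.card A ^ (Ω' \ Ω).card : ℕ) : ℝ)) := by
        refine Real.log_le_log (by exact_mod_cast h1) (by exact_mod_cast hstep)
    _ = Real.log (((Set.restrict (↑Ω : Set G) '' Z).ncard : ℝ)) +
        ((Ω' \ Ω).card : ℝ) * Real.log (Nat.card A) := by
        rw [Nat.cast_mul, Real.log_mul (by exact_mod_cast Nat.one_le_iff_ne_zero.mp h1')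
          (by positivity), Nat.cast_pow, Real.log_pow]

end Bounds

lemma aux_limsup_le {J : Type*} [Preorder J] [Nonempty J] [IsDirected J (· ≤ ·)]
    {u v w : J → ℝ} {C : ℝ}
    (hu : ∀ j, u j ∈ Set.Icc 0 C) (hv : ∀ j, v j ∈ Set.Icc 0 C)
    (hw : Tendsto w atTop (nhds 0)) (hle : ∀ j, u j ≤ v j + w j) :
    limsup u atTop ≤ limsup v atTop := by
  have hne : (atTop : Filter J).NeBot := atTop_neBot_iff.mpr ⟨‹_›, ‹_›⟩
  have hvb : IsBoundedUnder (· ≤ ·) (atTop : Filter J) v :=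
    ⟨C, eventually_map.mpr (Eventually.of_forall fun j => (hv j).2)⟩
  have hvcb : IsCoboundedUnder (· ≤ ·) (atTop : Filter J) v :=
    IsBoundedUnder.isCoboundedUnder_le ⟨0, eventually_map.mpr (Eventually.of_forall fun j => (hv j).1)⟩
  refine le_of_forall_pos_le_add fun ε hε => ?_
  have hwe : ∀ᶠ j in atTop, w j ≤ ε := hw.eventually (ge_mem_nhds hε)
  have h1 : limsup u atTop ≤ limsup (fun j => v j + ε) atTop := by
    refine limsup_le_limsup (hwe.mono fun j hj => (hle j).trans (add_le_add (le_refl (v j)) hj)) ?_ ?_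
    · exact IsBoundedUnder.isCoboundedUnder_le ⟨0, eventually_map.mpr (Eventually.of_forall fun j => (hu j).1)⟩
    · exact ⟨C + ε, eventually_map.mpr (Eventually.of_forall fun j => add_le_add (hv j).2 le_rfl)⟩
  rw [limsup_add_const (atTop : Filter J) v ε hvb hvcb] at h1
  exact h1


/-- A pre-injective cellular automaton on a strongly irreducible subshift
preserves entropy. -/
theorem entropy_image_eq_of_preInjective {A B : Type*} [Fintype A] [Fintype B]
    [TopologicalSpace A] [DiscreteTopology A] [TopologicalSpace B] [DiscreteTopology B]
    {J : Type*} [Nonempty J] [Preorder J] [IsDirected J (· ≤ ·)]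
    (F : J → Finset G) (hF : IsFolnerNet F)
    (X : Set (G → A)) (hX : IsSubshift X) (hSI : StronglyIrreducible X)
    (Y : Set (G → B)) (hY : IsSubshift Y)
    (τ : (G → A) → (G → B)) (hτ : IsCellularAutomaton X Y τ)
    (hpre : PreInjective X τ) :
    entropy F (τ '' X) = entropy F X := by
  classical
  rcases X.eq_empty_or_nonempty with hXe | hXne
  · rw [hXe, Set.image_empty]
    unfold entropy
    simp
  obtain ⟨x₀, hx₀⟩ := hXne
  have hXne : X.Nonempty := ⟨x₀, hx₀⟩
  have hYne : (τ '' X).Nonempty := hXne.image τ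
  haveI hAne : Nonempty A := ⟨x₀ 1⟩
  haveI hBne : Nonempty B := ⟨τ x₀ 1⟩
  obtain ⟨Δ₀, hΔ₀⟩ := hSI
  set Δ : Finset G := insert 1 Δ₀ with hΔdef
  have hΔ : DeltaIrreducible Δ X := by
    intro Ω₁ Ω₂ hdisj x₁ hx₁ x₂ hx₂
    refine hΔ₀ Ω₁ Ω₂ ?_ x₁ hx₁ x₂ hx₂
    rw [Set.eq_empty_iff_forall_notMem] at hdisj ⊢
    rintro g ⟨⟨d, hd, hgd⟩, hg2⟩
    refine hdisj g ⟨⟨d, ?_, hgd⟩, hg2⟩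
    simp only [hΔdef, Finset.coe_insert, Set.mem_insert_iff]
    right
    exact hd
  have h1Δ : (1:G) ∈ Δ := Finset.mem_insert_self _ _
  obtain ⟨M, h1M, hMmem⟩ := exists_memory hX.1 hτ.2.1
  have hM := memory_all hX hτ hMmem
  set E₁ : Finset G := Δ⁻¹ * M⁻¹ with hE₁def
  have h1E₁ : (1:G) ∈ E₁ := by
    have h11 : (1:G)⁻¹ * (1:G)⁻¹ = 1 := by group
    exact h11 ▸ Finset.mul_mem_mul (Finset.inv_mem_inv h1Δ) (Finset.inv_mem_inv h1M)
  set C : ℝ := max (Real.log (Nat.card A)) (Real.log (Nat.card B)) with hC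
  set u : J → ℝ := fun j =>
    Real.log (((Set.restrict ((F j : Finset G) : Set G)) '' X).ncard : ℝ) / ((F j).card : ℝ)
    with hu_def
  set v : J → ℝ := fun j =>
    Real.log (((Set.restrict ((F j : Finset G) : Set G)) '' (τ '' X)).ncard : ℝ) / ((F j).card : ℝ)
    with hv_def
  have hcFpos : ∀ j, (0:ℝ) < ((F j).card : ℝ) := fun j => by exact_mod_cast (hF.1 j).card_pos
  have hu_mem : ∀ j, u j ∈ Set.Icc 0 C := fun j => by
    have := aux_bounds hXne (F j) (hF.1 j)
    exact ⟨this.1, this.2.trans (le_max_left _ _)⟩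
  have hv_mem : ∀ j, v j ∈ Set.Icc 0 C := fun j => by
    have := aux_bounds hYne (F j) (hF.1 j)
    exact ⟨this.1, this.2.trans (le_max_right _ _)⟩
  -- boundary error terms
  have hbdry : ∀ E : Finset G,
      Tendsto (fun j => (((F j * E) \ F j).card : ℝ) / ((F j).card : ℝ)) atTop (nhds 0) := by
    intro E
    refine (hF.2 E⁻¹).congr fun j => ?_
    rw [plusNbhd_coe, ← Finset.coe_sdiff, Set.ncard_coe_finset]
  -- inequality 1 : u ≤ v + w₁
  have hineq1 : ∀ j, u j ≤ v j +
      Real.log (Nat.card B) * ((((F j * E₁) \ F j).card : ℝ) / ((F j).card : ℝ)) := by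
    intro j
    have hstep1 : ((Set.restrict ((F j : Finset G) : Set G)) '' X).ncard ≤
        ((Set.restrict ((F j * E₁ : Finset G) : Set G)) '' (τ '' X)).ncard := by
      have h := pat_le_image hX.1 hΔ hM hpre hx₀ (F j)
      rwa [hE₁def, ← mul_assoc]
    have hlog1 : Real.log ((((Set.restrict ((F j : Finset G) : Set G)) '' X).ncard : ℕ) : ℝ) ≤
        Real.log ((((Set.restrict ((F j * E₁ : Finset G) : Set G)) '' (τ '' X)).ncard : ℕ) : ℝ) := by
      refine Real.log_le_log ?_ (by exact_mod_cast hstep1)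
      have h1 : 1 ≤ ((Set.restrict ((F j : Finset G) : Set G)) '' X).ncard :=
        (Set.ncard_pos (Set.toFinite _)).mpr (hXne.image _)
      exact_mod_cast h1
    have hsubj : F j ⊆ F j * E₁ := fun a ha => by
      simpa using Finset.mul_mem_mul ha h1E₁
    have hlog2 := aux_log_step hYne hsubj
    have hkey : Real.log ((((Set.restrict ((F j : Finset G) : Set G)) '' X).ncard : ℕ) : ℝ) ≤
        Real.log ((((Set.restrict ((F j : Finset G) : Set G)) '' (τ '' X)).ncard : ℕ) : ℝ) +
          (((F j * E₁) \ F j).card : ℝ) * Real.log (Nat.card B) :=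
      hlog1.trans hlog2
    rw [hu_def, hv_def]
    calc Real.log ((((Set.restrict ((F j : Finset G) : Set G)) '' X).ncard : ℕ) : ℝ) / ((F j).card : ℝ)
        ≤ (Real.log ((((Set.restrict ((F j : Finset G) : Set G)) '' (τ '' X)).ncard : ℕ) : ℝ) +
          (((F j * E₁) \ F j).card : ℝ) * Real.log (Nat.card B)) / ((F j).card : ℝ) :=
          (div_le_div_iff_of_pos_right (hcFpos j)).mpr hkey
      _ = Real.log ((((Set.restrict ((F j : Finset G) : Set G)) '' (τ '' X)).ncard : ℕ) : ℝ) / ((F j).card : ℝ) +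
          Real.log (Nat.card B) * ((((F j * E₁) \ F j).card : ℝ) / ((F j).card : ℝ)) := by
          ring
  -- inequality 2 : v ≤ u + w₂
  have hineq2 : ∀ j, v j ≤ u j +
      Real.log (Nat.card A) * ((((F j * M) \ F j).card : ℝ) / ((F j).card : ℝ)) := by
    intro j
    have hstep1 : ((Set.restrict ((F j : Finset G) : Set G)) '' (τ '' X)).ncard ≤
        ((Set.restrict ((F j * M : Finset G) : Set G)) '' X).ncard := pat_image_le hM (F j)
    have hlog1 : Real.log ((((Set.restrict ((F j : Finset G) : Set G)) '' (τ '' X)).ncard : ℕ) : ℝ) ≤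
        Real.log ((((Set.restrict ((F j * M : Finset G) : Set G)) '' X).ncard : ℕ) : ℝ) := by
      refine Real.log_le_log ?_ (by exact_mod_cast hstep1)
      have h1 : 1 ≤ ((Set.restrict ((F j : Finset G) : Set G)) '' (τ '' X)).ncard :=
        (Set.ncard_pos (Set.toFinite _)).mpr (hYne.image _)
      exact_mod_cast h1
    have hsubj : F j ⊆ F j * M := fun a ha => by
      simpa using Finset.mul_mem_mul ha h1M
    have hlog2 := aux_log_step hXne hsubj
    have hkey := hlog1.trans hlog2
    rw [hu_def, hv_def]
    calc Real.log ((((Set.restrict ((F j : Finset G) : Set G)) '' (τ '' X)).ncard : ℕ) : ℝ) / ((F j).card : ℝ)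
        ≤ (Real.log ((((Set.restrict ((F j : Finset G) : Set G)) '' X).ncard : ℕ) : ℝ) +
          (((F j * M) \ F j).card : ℝ) * Real.log (Nat.card A)) / ((F j).card : ℝ) :=
          (div_le_div_iff_of_pos_right (hcFpos j)).mpr hkey
      _ = Real.log ((((Set.restrict ((F j : Finset G) : Set G)) '' X).ncard : ℕ) : ℝ) / ((F j).card : ℝ) +
          Real.log (Nat.card A) * ((((F j * M) \ F j).card : ℝ) / ((F j).card : ℝ)) := by
          ring
  have hw1 : Tendsto (fun j => Real.log (Nat.card B) *
      ((((F j * E₁) \ F j).card : ℝ) / ((F j).card : ℝ))) atTop (nhds 0) := by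
    simpa using (hbdry E₁).const_mul (Real.log (Nat.card B))
  have hw2 : Tendsto (fun j => Real.log (Nat.card A) *
      ((((F j * M) \ F j).card : ℝ) / ((F j).card : ℝ))) atTop (nhds 0) := by
    simpa using (hbdry M).const_mul (Real.log (Nat.card A))
  have main1 : limsup u atTop ≤ limsup v atTop :=
    aux_limsup_le hu_mem hv_mem hw1 hineq1
  have main2 : limsup v atTop ≤ limsup u atTop :=
    aux_limsup_le hv_mem hu_mem hw2 hineq2
  have e1 : entropy F X = limsup u atTop := rfl
  have e2 : entropy F (τ '' X) = limsup v atTop := rfl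
  rw [e1, e2]
  exact le_antisymm main2 main1
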